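/- arXiv:2409.02404 — 2 statements merged into one kernel-verified Lean document; each statement's English description precedes it below -/
import Mathlib

section
/- Let ε > 0 and Δ > 0, and let a, a' ∈ ℝ satisfy |a − a'| ≤ Δ. Let Lap(Δ/ε) denote the Laplace measure with scale Δ/ε, and for a real number t let M(t) be the pushforward of Lap(Δ/ε) under the map x ↦ x + t. Then for every measurable set S ⊆ ℝ, M(a)(S) ≤ exp(ε) · M(a')(S). In words: releasing a real value perturbed by Laplace noise of scale Δ/ε is ε-differentially private whenever the value changes by at most Δ between adjacent inputs. -/
open MeasureTheory

/-- The Laplace measure with location 0 and scale `b` on `ℝ`: density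
`x ↦ (1/(2b)) · exp(−|x|/b)` with respect to Lebesgue measure. -/
noncomputable def lap (b : ℝ) : Measure ℝ :=
  volume.withDensity fun x => ENNReal.ofReal ((1 / (2 * b)) * Real.exp (-|x| / b))

/-- The Laplace mechanism: releasing a real value perturbed by Laplace noise of scale
`Δ/ε` is `ε`-differentially private whenever the value changes by at most `Δ` between
adjacent inputs. -/
theorem laplace_mechanism_dp (ε Δ a a' : ℝ) (hε : 0 < ε) (hΔ : 0 < Δ)
    (hadj : |a - a'| ≤ Δ) (S : Set ℝ) (hS : MeasurableSet S) :
    (lap (Δ / ε)).map (fun x => x + a) S ≤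
      ENNReal.ofReal (Real.exp ε) * (lap (Δ / ε)).map (fun x => x + a') S := by
  have hb : 0 < Δ / ε := div_pos hΔ hε
  set b := Δ / ε with hbdef
  set g : ℝ → ENNReal := fun x => ENNReal.ofReal ((1 / (2 * b)) * Real.exp (-|x| / b))
    with hg
  have hgm : Measurable g := by
    apply Measurable.ennreal_ofReal
    fun_prop
  have key : ∀ t : ℝ, (lap b).map (fun x => x + t) S
      = ∫⁻ x, S.indicator (fun y => g (y - t)) x := by
    intro t
    rw [Measure.map_apply (by fun_prop) hS, lap,
      withDensity_apply _ (hS.preimage (measurable_add_const t)),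
      ← lintegral_indicator (hS.preimage (measurable_add_const t))]
    rw [← lintegral_add_right_eq_self
      (fun x => S.indicator (fun y => g (y - t)) x) t]
    congr 1
    funext x
    by_cases hx : x + t ∈ S
    · rw [Set.indicator_of_mem hx, Set.indicator_of_mem (show x ∈ (fun x => x + t) ⁻¹' S from hx)]
      simp [hg]
    · rw [Set.indicator_of_notMem hx,
        Set.indicator_of_notMem (show x ∉ (fun x => x + t) ⁻¹' S from hx)]
  rw [key a, key a']
  rw [← lintegral_const_mul _ (by
    exact ((hgm.comp (measurable_id.sub_const a')).indicator hS))]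
  apply lintegral_mono
  intro x
  by_cases hx : x ∈ S
  · simp only [Set.indicator_of_mem hx]
    have hexp : (0:ℝ) ≤ Real.exp ε := (Real.exp_pos ε).le
    rw [hg]
    simp only
    rw [← ENNReal.ofReal_mul hexp]
    apply ENNReal.ofReal_le_ofReal
    rw [← mul_assoc, mul_comm (Real.exp ε), mul_assoc]
    apply mul_le_mul_of_nonneg_left _ (by positivity)
    rw [← Real.exp_add]
    apply Real.exp_le_exp.2
    have hεb : ε * b = Δ := by rw [hbdef]; field_simp [hε.ne']
    have h1 : |x - a'| ≤ |x - a| + Δ := by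
      calc |x - a'| = |(x - a) + (a - a')| := by ring_nf
        _ ≤ |x - a| + |a - a'| := abs_add_le _ _
        _ ≤ |x - a| + Δ := by linarith
    have h2 : ε + -|x - a'| / b = (ε * b + -|x - a'|) / b := by
      field_simp
    rw [h2, div_le_div_iff₀ hb hb]
    nlinarith
  · simp [Set.indicator_of_notMem hx]
end

section
/- Let ε > 0, let k ≥ 2 be a natural number, and let v, v' : Fin k → ℝ be vote-count vectors satisfying |v_i − v'_i| ≤ 1 for every i. Let N = (N_1, …, N_k) be independent Laplace random variables each with scale 2/ε (i.e., N is distributed according to the k-fold product of Lap(2/ε)). Then for every index j, P[∀ i ≠ j, v_j + N_j > v_i + N_i] ≤ exp(ε) · P[∀ i ≠ j, v'_j + N_j > v'_i + N_i]. In words: the noisy-argmax aggregation that outputs the class with maximal noisy vote count, with Laplace noise of scale 2/ε, is ε-differentially private whenever adjacent datasets change each vote count by at most 1. -/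
open MeasureTheory

open ENNReal in
theorem lintegral_fin_prod {n : ℕ} (μ : Fin n → Measure ℝ) [∀ i, SigmaFinite (μ i)]
    (f : Fin n → ℝ → ℝ≥0∞) (hf : ∀ i, Measurable (f i)) :
    ∫⁻ x, ∏ i, f i (x i) ∂Measure.pi μ = ∏ i, ∫⁻ x, f i x ∂μ i := by
  induction n with
  | zero => simp
  | succ n ih =>
    have h := (measurePreserving_piFinSuccAbove μ 0).symm
    have hF : Measurable fun x : Fin (n+1) → ℝ => ∏ i, f i (x i) :=
      Finset.measurable_prod _ fun i _ => (hf i).comp (measurable_pi_apply i)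
    rw [← h.lintegral_comp hF]
    simp_rw [MeasurableEquiv.piFinSuccAbove_symm_apply, Fin.insertNthEquiv,
      Fin.prod_univ_succ, Fin.insertNth_zero, Equiv.coe_fn_mk, Fin.cons_succ,
      Fin.zero_succAbove, Fin.cons_zero, cast_eq]
    rw [lintegral_prod_mul (f := f 0) (g := fun y : Fin n → ℝ => ∏ i, f i.succ (y i))
      ((hf 0).aemeasurable)
      (Measurable.aemeasurable (by
        exact Finset.measurable_prod _ fun i _ =>
          (hf i.succ).comp (measurable_pi_apply i)))]
    rw [ih (fun i => μ i.succ) (fun i => f i.succ) (fun i => hf i.succ)]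

theorem pi_withDensity_ofReal {n : ℕ} (f : ℝ → ℝ) (hf : Measurable f) :
    (Measure.pi fun _ : Fin n => volume.withDensity fun x => ENNReal.ofReal (f x))
      = (volume : Measure (Fin n → ℝ)).withDensity
          fun x => ∏ i, ENNReal.ofReal (f (x i)) := by
  refine Measure.pi_eq fun s hs => ?_
  have hmeas : ∀ i : Fin n, Measurable ((s i).indicator fun y => ENNReal.ofReal (f y)) :=
    fun i => (hf.ennreal_ofReal).indicator (hs i)
  rw [withDensity_apply _ (MeasurableSet.univ_pi hs),
    ← lintegral_indicator (MeasurableSet.univ_pi hs)]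
  have key : ∀ x : Fin n → ℝ,
      (Set.pi Set.univ s).indicator (fun x => ∏ i, ENNReal.ofReal (f (x i))) x
        = ∏ i, (s i).indicator (fun y => ENNReal.ofReal (f y)) (x i) := by
    intro x
    by_cases hx : x ∈ Set.pi Set.univ s
    · rw [Set.indicator_of_mem hx]
      exact Finset.prod_congr rfl fun i _ =>
        (Set.indicator_of_mem (hx i trivial) fun y => ENNReal.ofReal (f y)).symm
    · rw [Set.indicator_of_notMem hx]
      obtain ⟨i, hi⟩ : ∃ i, x i ∉ s i := by
        by_contra h
        push_neg at h
        exact hx fun i _ => h i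
      exact (Finset.prod_eq_zero (Finset.mem_univ i)
        (Set.indicator_of_notMem hi fun y => ENNReal.ofReal (f y))).symm
  simp_rw [key]
  rw [MeasureTheory.volume_pi, lintegral_fin_prod _ _ hmeas]
  refine Finset.prod_congr rfl fun i _ => ?_
  rw [lintegral_indicator (hs i), withDensity_apply _ (hs i)]

/-- Noisy-argmax aggregation with independent Laplace noise of scale `2/ε` on each vote
count is `ε`-differentially private when adjacent datasets change each count by at most 1:
for every class `j`, the probability that `j` has the strictly largest noisy count changes
by at most a factor `exp ε`. -/
theorem noisy_argmax_dp (ε : ℝ) (hε : 0 < ε) (k : ℕ) (hk : 2 ≤ k)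
    (v v' : Fin k → ℝ) (hadj : ∀ i, |v i - v' i| ≤ 1) (j : Fin k) :
    (Measure.pi fun _ : Fin k => lap (2 / ε))
        {N | ∀ i, i ≠ j → v i + N i < v j + N j} ≤
      ENNReal.ofReal (Real.exp ε) *
        (Measure.pi fun _ : Fin k => lap (2 / ε))
          {N | ∀ i, i ≠ j → v' i + N i < v' j + N j} := by
  set b : ℝ := 2 / ε with hbdef
  have hb : (0:ℝ) < b := by positivity
  set f : ℝ → ℝ := fun x => (1 / (2 * b)) * Real.exp (-|x| / b) with hfdef
  have hfm : Measurable f :=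
    (Real.measurable_exp.comp ((measurable_abs.neg).div_const b)).const_mul _
  have hfnn : ∀ x, 0 ≤ f x := fun x => by
    have := Real.exp_nonneg (-|x| / b); positivity
  set G : (Fin k → ℝ) → ENNReal := fun x => ∏ i, ENNReal.ofReal (f (x i)) with hGdef
  have hGm : Measurable G :=
    Finset.measurable_prod _ fun i _ =>
      (hfm.ennreal_ofReal).comp (measurable_pi_apply i)
  have hpi : (Measure.pi fun _ : Fin k => lap b)
      = (volume : Measure (Fin k → ℝ)).withDensity G := by
    show (Measure.pi fun _ : Fin k =>
      volume.withDensity fun x => ENNReal.ofReal (f x)) = _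
    exact pi_withDensity_ofReal f hfm
  set A : Set (Fin k → ℝ) := {N | ∀ i, i ≠ j → v i + N i < v j + N j} with hA
  set A' : Set (Fin k → ℝ) := {N | ∀ i, i ≠ j → v' i + N i < v' j + N j} with hA'
  have hmeasA' : MeasurableSet A' := by
    have : A' = ⋂ i, {N : Fin k → ℝ | i ≠ j → v' i + N i < v' j + N j} := by
      ext N; simp [hA', Set.mem_iInter]
    rw [this]
    refine MeasurableSet.iInter fun i => ?_
    by_cases hi : i = j
    · simp [hi]
    · have : {N : Fin k → ℝ | i ≠ j → v' i + N i < v' j + N j}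
          = {N : Fin k → ℝ | v' i + N i < v' j + N j} := by
        ext N; simp [hi]
      rw [this]
      exact measurableSet_lt ((measurable_pi_apply i).const_add _)
        ((measurable_pi_apply j).const_add _)
  set t : Fin k → ℝ := Pi.single j 2 with ht
  set T : (Fin k → ℝ) → (Fin k → ℝ) := fun N => t + N with hT
  have hTm : Measurable T := measurable_id.const_add t
  have hsub : A ⊆ T ⁻¹' A' := by
    intro N hN i hi
    have h1 := hN i hi
    have h2 := (abs_le.1 (hadj i)).1
    have h3 := (abs_le.1 (hadj j)).2
    have hti : t i = 0 := Pi.single_eq_of_ne hi 2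
    have htj : t j = 2 := Pi.single_eq_same j 2
    show v' i + (t + N) i < v' j + (t + N) j
    simp only [Pi.add_apply, hti, htj]
    linarith
  -- pointwise density bound
  have hpt : ∀ x : ℝ, f (x - 2) ≤ Real.exp ε * f x := by
    intro x
    have h2b : 2 / b = ε := by rw [hbdef]; field_simp
    have habs : -|x - 2| ≤ 2 - |x| := by
      have := abs_sub_abs_le_abs_sub x (x - 2)
      have h2 : |x - (x - 2)| = 2 := by norm_num
      linarith [h2 ▸ this]
    have hdiv : -|x - 2| / b ≤ ε - |x| / b := by
      have := (div_le_div_iff_of_pos_right hb).2 habs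
      rw [sub_div, h2b] at this
      linarith
    have hexp : Real.exp (-|x - 2| / b) ≤ Real.exp ε * Real.exp (-|x| / b) := by
      rw [← Real.exp_add]
      exact Real.exp_le_exp.2 (by linarith [neg_div b |x|, neg_div b |x - 2|])
    have hc : (0:ℝ) ≤ 1 / (2 * b) := by positivity
    calc f (x - 2) = (1 / (2 * b)) * Real.exp (-|x - 2| / b) := rfl
      _ ≤ (1 / (2 * b)) * (Real.exp ε * Real.exp (-|x| / b)) :=
          mul_le_mul_of_nonneg_left hexp hc
      _ = Real.exp ε * f x := by ring
  have hGpt : ∀ y : Fin k → ℝ, G (y - t) ≤ ENNReal.ofReal (Real.exp ε) * G y := by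
    intro y
    have e1 : G (y - t)
        = ENNReal.ofReal (f ((y - t) j))
          * ∏ i ∈ Finset.univ.erase j, ENNReal.ofReal (f ((y - t) i)) :=
      (Finset.mul_prod_erase _ _ (Finset.mem_univ j)).symm
    have e2 : G y
        = ENNReal.ofReal (f (y j))
          * ∏ i ∈ Finset.univ.erase j, ENNReal.ofReal (f (y i)) :=
      (Finset.mul_prod_erase _ _ (Finset.mem_univ j)).symm
    have e3 : ∀ i ∈ Finset.univ.erase j, ENNReal.ofReal (f ((y - t) i))
        = ENNReal.ofReal (f (y i)) := by
      intro i hi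
      have : t i = 0 := Pi.single_eq_of_ne (Finset.mem_erase.1 hi).1 2
      simp [Pi.sub_apply, this]
    have e4 : (y - t) j = y j - 2 := by
      simp [Pi.sub_apply, ht, Pi.single_eq_same]
    have hfirst : ENNReal.ofReal (f ((y - t) j))
        ≤ ENNReal.ofReal (Real.exp ε) * ENNReal.ofReal (f (y j)) := by
      rw [e4, ← ENNReal.ofReal_mul (Real.exp_nonneg ε)]
      exact ENNReal.ofReal_le_ofReal (hpt (y j))
    calc G (y - t)
        = ENNReal.ofReal (f ((y - t) j))
          * ∏ i ∈ Finset.univ.erase j, ENNReal.ofReal (f (y i)) := by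
          rw [e1, Finset.prod_congr rfl e3]
      _ ≤ (ENNReal.ofReal (Real.exp ε) * ENNReal.ofReal (f (y j)))
          * ∏ i ∈ Finset.univ.erase j, ENNReal.ofReal (f (y i)) :=
          mul_le_mul_left hfirst _
      _ = ENNReal.ofReal (Real.exp ε) * G y := by rw [e2, mul_assoc]
  -- change of variables
  have hmp : MeasurePreserving T volume volume := by
    exact measurePreserving_add_left volume t
  have hemb : MeasurableEmbedding T :=
    (MeasurableEquiv.addLeft t).measurableEmbedding
  have hchg : ∫⁻ x in T ⁻¹' A', G x ∂(volume : Measure (Fin k → ℝ))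
      = ∫⁻ y in A', G (y - t) ∂(volume : Measure (Fin k → ℝ)) := by
    have := hmp.setLIntegral_comp_preimage_emb hemb (fun y => G (y - t)) A'
    simp only [hT] at this ⊢
    rw [← this]
    refine setLIntegral_congr_fun ((hmeasA'.preimage hTm)) ?_
    intro x _
    simp
  calc (Measure.pi fun _ : Fin k => lap b) A
      ≤ (Measure.pi fun _ : Fin k => lap b) (T ⁻¹' A') := measure_mono hsub
    _ = ∫⁻ x in T ⁻¹' A', G x ∂(volume : Measure (Fin k → ℝ)) := by
        rw [hpi, withDensity_apply _ (hmeasA'.preimage hTm)]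
    _ = ∫⁻ y in A', G (y - t) ∂(volume : Measure (Fin k → ℝ)) := hchg
    _ ≤ ∫⁻ y in A', ENNReal.ofReal (Real.exp ε) * G y
          ∂(volume : Measure (Fin k → ℝ)) := lintegral_mono fun y => hGpt y
    _ = ENNReal.ofReal (Real.exp ε)
          * ∫⁻ y in A', G y ∂(volume : Measure (Fin k → ℝ)) :=
        lintegral_const_mul' _ _ ENNReal.ofReal_ne_top
    _ = ENNReal.ofReal (Real.exp ε) * (Measure.pi fun _ : Fin k => lap b) A' := by
        rw [hpi, withDensity_apply _ hmeasA']
end
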